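/- Let X be an infinite-dimensional complex Banach space, T a bounded linear operator on X, and b > 1. Suppose x ∈ X is [1,b]𝕋-supercyclic for T and the closure of Orb(𝕋x,T) intersected with [1,b]𝕋x equals 𝕋x ∪ b𝕋x. If μ > 0 is a real number such that μ·x belongs to the closure of Orb(𝕋x,T), then μ·b^m·x belongs to the closure of Orb(𝕋x,T) for every m ∈ ℤ. -/

import Mathlib

/-- **Lemma 3.9.** Let `x` be `[1,b]𝕋`-supercyclic for `T` with
`closure(Orb(𝕋x,T)) ∩ [1,b]𝕋x = 𝕋x ∪ b𝕋x`. If `μ > 0` and `μ·x ∈ closure(Orb(𝕋x,T))`,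
then `μ·b^m·x ∈ closure(Orb(𝕋x,T))` for every `m ∈ ℤ`. -/
theorem annulus_supercyclic_powers_of_b
    (X : Type*) [NormedAddCommGroup X] [NormedSpace ℂ X] [CompleteSpace X]
    (hX : ¬FiniteDimensional ℂ X) (T : X →L[ℂ] X) (b : ℝ) (hb : 1 < b)
    (x : X)
    (hx : Dense {y : X | ∃ t ∈ Set.Icc (1 : ℝ) b, ∃ z : ℂ, ‖z‖ = 1 ∧
      ∃ n : ℕ, y = ((t : ℂ) * z) • (T ^ n) x})
    (hexc : closure {y : X | ∃ z : ℂ, ‖z‖ = 1 ∧ ∃ n : ℕ, y = z • (T ^ n) x} ∩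
        {y : X | ∃ t ∈ Set.Icc (1 : ℝ) b, ∃ z : ℂ, ‖z‖ = 1 ∧ y = ((t : ℂ) * z) • x} =
      {y : X | ∃ z : ℂ, ‖z‖ = 1 ∧ y = z • x} ∪
        {y : X | ∃ z : ℂ, ‖z‖ = 1 ∧ y = ((b : ℂ) * z) • x})
    (μ : ℝ) (hμ : 0 < μ)
    (hmem : ((μ : ℂ)) • x ∈ closure {y : X | ∃ z : ℂ, ‖z‖ = 1 ∧ ∃ n : ℕ, y = z • (T ^ n) x}) :
    ∀ m : ℤ, ((μ * b ^ m : ℝ) : ℂ) • x ∈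
      closure {y : X | ∃ z : ℂ, ‖z‖ = 1 ∧ ∃ n : ℕ, y = z • (T ^ n) x} := by
  intro m
  set Orb : Set X := {y : X | ∃ z : ℂ, ‖z‖ = 1 ∧ ∃ n : ℕ, y = z • (T ^ n) x} with hOrbdef
  have hbne : b ≠ 0 := by linarith
  by_cases hx0 : x = 0
  · have heq : ((μ * b ^ m : ℝ) : ℂ) • x = x := by simp [hx0]
    rw [heq]
    exact subset_closure ⟨1, by simp, 0, by simp [hx0]⟩
  -- invariance of closure Orb under y ↦ w • T^k y
  have hinv : ∀ w : ℂ, ‖w‖ = 1 → ∀ k : ℕ, ∀ p ∈ closure Orb, w • (T ^ k) p ∈ closure Orb := by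
    intro w hw k p hp
    have hcont : Continuous fun y : X => w • (T ^ k) y := ((T ^ k).continuous).const_smul w
    have himg : (fun y : X => w • (T ^ k) y) '' Orb ⊆ Orb := by
      rintro _ ⟨_, ⟨z, hz, n, rfl⟩, rfl⟩
      refine ⟨w * z, by simp [norm_mul, hw, hz], k + n, ?_⟩
      show w • (T ^ k) (z • (T ^ n) x) = (w * z) • (T ^ (k + n)) x
      rw [map_smul, mul_smul, pow_add, ContinuousLinearMap.mul_apply]
    have h2 : w • (T ^ k) p ∈ closure ((fun y : X => w • (T ^ k) y) '' Orb) :=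
      image_closure_subset_closure_image hcont ⟨p, hp, rfl⟩
    exact closure_mono himg h2
  -- scalar multiplication invariance
  have hmulC : ∀ c : ℝ, ((c : ℂ)) • x ∈ closure Orb →
      ∀ p ∈ closure Orb, ((c : ℂ)) • p ∈ closure Orb := by
    intro c hc p hp
    have hcont : Continuous fun y : X => (c : ℂ) • y := continuous_const_smul _
    have himg : (fun y : X => (c : ℂ) • y) '' Orb ⊆ closure Orb := by
      rintro _ ⟨_, ⟨z, hz, n, rfl⟩, rfl⟩
      have heq : (c : ℂ) • (z • (T ^ n) x) = z • (T ^ n) ((c : ℂ) • x) := by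
        rw [map_smul, smul_comm]
      show (c : ℂ) • (z • (T ^ n) x) ∈ closure Orb
      rw [heq]
      exact hinv z hz n _ hc
    have h2 : (c : ℂ) • p ∈ closure ((fun y : X => (c : ℂ) • y) '' Orb) :=
      image_closure_subset_closure_image hcont ⟨p, hp, rfl⟩
    have h3 := closure_mono himg h2
    rwa [closure_closure] at h3
  have hmulS : ∀ c d : ℝ, ((c : ℂ)) • x ∈ closure Orb → ((d : ℂ)) • x ∈ closure Orb →
      ((c * d : ℝ) : ℂ) • x ∈ closure Orb := by
    intro c d hc hd
    have h := hmulC c hc _ hd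
    have heq : ((c * d : ℝ) : ℂ) • x = (c : ℂ) • ((d : ℂ) • x) := by
      push_cast; rw [mul_smul]
    rwa [heq]
  -- b ∈ S
  have hbS : ((b : ℝ) : ℂ) • x ∈ closure Orb := by
    have hy : ((b : ℂ) * 1) • x ∈
        ({y : X | ∃ z : ℂ, ‖z‖ = 1 ∧ y = z • x} ∪
          {y : X | ∃ z : ℂ, ‖z‖ = 1 ∧ y = ((b : ℂ) * z) • x}) := by
      right; exact ⟨1, by simp, rfl⟩
    rw [← hexc] at hy
    have := hy.1
    rwa [mul_one] at this
  -- dichotomy from hexc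
  have hdichot : ∀ c : ℝ, c ∈ Set.Icc (1 : ℝ) b → ((c : ℂ)) • x ∈ closure Orb →
      c = 1 ∨ c = b := by
    intro c hc hcC
    have hmem2 : ((c : ℂ)) • x ∈ closure Orb ∩
        {y : X | ∃ t ∈ Set.Icc (1 : ℝ) b, ∃ z : ℂ, ‖z‖ = 1 ∧ y = ((t : ℂ) * z) • x} :=
      ⟨hcC, c, hc, 1, by simp, by rw [mul_one]⟩
    rw [hexc] at hmem2
    have hc0 : (0:ℝ) < c := lt_of_lt_of_le one_pos hc.1
    rcases hmem2 with ⟨z, hz, hzeq⟩ | ⟨z, hz, hzeq⟩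
    · left
      have hcz : (c : ℂ) = z := by
        have := sub_eq_zero.mpr hzeq
        rw [← sub_smul] at this
        rcases smul_eq_zero.mp this with h | h
        · exact sub_eq_zero.mp h
        · exact absurd h hx0
      have : ‖(c : ℂ)‖ = 1 := by rw [hcz]; exact hz
      rw [Complex.norm_real, Real.norm_eq_abs, abs_of_pos hc0] at this
      exact this
    · right
      have hcz : (c : ℂ) = (b : ℂ) * z := by
        have := sub_eq_zero.mpr hzeq
        rw [← sub_smul] at this
        rcases smul_eq_zero.mp this with h | h
        · exact sub_eq_zero.mp h
        · exact absurd h hx0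
      have : ‖(c : ℂ)‖ = ‖(b : ℂ) * z‖ := by rw [hcz]
      rw [Complex.norm_real, Real.norm_eq_abs, abs_of_pos hc0, norm_mul, Complex.norm_real,
        hz, mul_one, Real.norm_eq_abs, abs_of_pos (by linarith : (0:ℝ) < b)] at this
      exact this
  -- compactness step
  have hstep : ∀ ν : ℝ, 0 < ν → ∃ t ∈ Set.Icc (1 : ℝ) b, ((ν / t : ℝ) : ℂ) • x ∈ closure Orb := by
    intro ν hν
    have hmem' : ((ν : ℂ)) • x ∈ closure {y : X | ∃ t ∈ Set.Icc (1 : ℝ) b, ∃ z : ℂ, ‖z‖ = 1 ∧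
        ∃ n : ℕ, y = ((t : ℂ) * z) • (T ^ n) x} := hx _
    rw [mem_closure_iff_seq_limit] at hmem'
    obtain ⟨u, hu, hlim⟩ := hmem'
    choose t ht z hz n hun using hu
    obtain ⟨tl, htl, φ, hφ, htlim⟩ := (isCompact_Icc (a := (1:ℝ)) (b := b)).tendsto_subseq ht
    refine ⟨tl, htl, ?_⟩
    have htl0 : tl ≠ 0 := by have := htl.1; intro h; rw [h] at this; linarith
    have htlC : ((tl : ℂ)) ≠ 0 := by exact_mod_cast htl0
    have hvmem : ∀ k, ((t (φ k) : ℂ))⁻¹ • u (φ k) ∈ Orb := by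
      intro k
      have htk0 : ((t (φ k) : ℂ)) ≠ 0 := by
        have := (ht (φ k)).1
        have : (0:ℝ) < t (φ k) := by linarith
        exact_mod_cast ne_of_gt this
      refine ⟨z (φ k), hz (φ k), n (φ k), ?_⟩
      rw [hun (φ k), smul_smul, ← mul_assoc, inv_mul_cancel₀ htk0, one_mul]
    have hclim : Filter.Tendsto (fun k => ((t (φ k) : ℂ))⁻¹ • u (φ k)) Filter.atTop
        (nhds (((tl : ℂ))⁻¹ • (((ν : ℂ)) • x))) := by
      have h1 : Filter.Tendsto (fun k => ((t (φ k) : ℂ))⁻¹) Filter.atTop (nhds ((tl : ℂ))⁻¹) := by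
        have h0 : Filter.Tendsto (fun k => ((t (φ k) : ℂ))) Filter.atTop (nhds ((tl : ℂ))) :=
          (Complex.continuous_ofReal.tendsto tl).comp htlim
        exact h0.inv₀ htlC
      have h2 : Filter.Tendsto (fun k => u (φ k)) Filter.atTop (nhds (((ν : ℂ)) • x)) :=
        hlim.comp hφ.tendsto_atTop
      exact h1.smul h2
    have hcl : ((tl : ℂ))⁻¹ • (((ν : ℂ)) • x) ∈ closure Orb :=
      mem_closure_of_tendsto hclim (Filter.Eventually.of_forall fun k => hvmem k)
    have heq : ((ν / tl : ℝ) : ℂ) • x = ((tl : ℂ))⁻¹ • (((ν : ℂ)) • x) := by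
      rw [smul_smul]
      push_cast
      rw [div_eq_inv_mul]
    rwa [heq]
  -- 1/b ∈ S
  have hinvb : ((1 / b : ℝ) : ℂ) • x ∈ closure Orb := by
    obtain ⟨t, ht, htS⟩ := hstep (1 / b) (by positivity)
    have ht0 : (0:ℝ) < t := lt_of_lt_of_le one_pos ht.1
    have h1 : ((1 / b / t * b : ℝ) : ℂ) • x ∈ closure Orb := hmulS _ _ htS hbS
    have he1 : (1 / b / t * b : ℝ) = 1 / t := by field_simp
    rw [he1] at h1
    have h2 : ((1 / t * b : ℝ) : ℂ) • x ∈ closure Orb := hmulS _ _ h1 hbS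
    have he2 : (1 / t * b : ℝ) = b / t := by ring
    rw [he2] at h2
    have hbt : b / t ∈ Set.Icc (1:ℝ) b := by
      constructor
      · rw [le_div_iff₀ ht0]; simpa using ht.2
      · rw [div_le_iff₀ ht0]; nlinarith [ht.1]
    rcases hdichot (b / t) hbt h2 with h | h
    · -- b / t = 1, so t = b, so 1/b/t = 1/b^2, and (1/b/t)*b = 1/b
      have htb : t = b := by
        have h2 := (div_eq_iff (ne_of_gt ht0)).mp h
        linarith
      have h3 : ((1 / b / t * b : ℝ) : ℂ) • x ∈ closure Orb := hmulS _ _ htS hbS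
      have he3 : (1 / b / t * b : ℝ) = 1 / b := by rw [htb]; field_simp
      rwa [he3] at h3
    · -- b / t = b, so t = 1, so 1/b/t = 1/b
      have ht1 : t = 1 := by
        have h2 := (div_eq_iff (ne_of_gt ht0)).mp h
        have := mul_left_cancel₀ hbne (by linarith : b * 1 = b * t)
        linarith
      have he3 : (1 / b / t : ℝ) = 1 / b := by rw [ht1]; ring
      rwa [he3] at htS
  -- induction over ℤ
  induction m using Int.induction_on with
  | zero => simpa using hmem
  | succ k ih =>
    have h := hmulS (μ * b ^ (k : ℤ)) b ih hbS
    have heq : (μ * b ^ ((k : ℤ) + 1) : ℝ) = μ * b ^ (k : ℤ) * b := by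
      rw [zpow_add_one₀ hbne]; ring
    rw [heq]
    exact h
  | pred k ih =>
    have h := hmulS (μ * b ^ (-(k : ℤ))) (1 / b) ih hinvb
    have heq : (μ * b ^ (-(k : ℤ) - 1) : ℝ) = μ * b ^ (-(k : ℤ)) * (1 / b) := by
      rw [zpow_sub_one₀ hbne]; ring
    rw [heq]
    exact h
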